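/- For every p ≥ 1, all ζ, α ∈ Z₂^p, and every real θ, the matrix exponential of the phased spinor satisfies exp(i·θ·(−i)^{ν(ζ,α)}·S^ζ_α) = cos θ · I + i·sin θ · (−i)^{ν(ζ,α)}·S^ζ_α, where I is the 2^p × 2^p identity matrix and exp is the matrix exponential. -/

import Mathlib

open Matrix

/-- `Z₂^p`, the binary strings of length `p`. -/
abbrev Z2 (p : ℕ) : Type := Fin p → ZMod 2

/-- Inner product of two binary strings, valued in `ZMod 2`. -/
def dotp {p : ℕ} (ζ γ : Z2 p) : ZMod 2 := ∑ i, ζ i * γ i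

/-- `(-1)^x` for `x : ZMod 2`, as a complex number. -/
noncomputable def sgn (x : ZMod 2) : ℂ := if x = 0 then 1 else -1

/-- The spinor `S^ζ_α`: the `2^p × 2^p` complex matrix with `(γ, β)` entry
`(-1)^{ζ·γ}` if `γ = β + α` and `0` otherwise. -/
noncomputable def Spinor {p : ℕ} (ζ α : Z2 p) : Matrix (Z2 p) (Z2 p) ℂ :=
  Matrix.of fun γ β => if γ = β + α then sgn (dotp ζ γ) else 0

/-- `ν(ζ,α)`: the number of indices `i` with `ζ i = 1` and `α i = 1`. -/
def nu {p : ℕ} (ζ α : Z2 p) : ℕ :=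
  (Finset.univ.filter fun i => ζ i = 1 ∧ α i = 1).card

lemma sgn_add (a b : ZMod 2) : sgn (a + b) = sgn a * sgn b := by
  unfold sgn
  have h : ∀ a b : ZMod 2, (a + b = 0 ↔ (a = 0 ↔ b = 0)) := by decide
  simp only [h]
  by_cases ha : a = 0 <;> by_cases hb : b = 0 <;> simp [ha, hb]

lemma sgn_mul_self (a : ZMod 2) : sgn a * sgn a = 1 := by
  unfold sgn
  split_ifs <;> norm_num

lemma sgn_natCast (n : ℕ) : sgn (n : ZMod 2) = (-1 : ℂ) ^ n := by
  induction n with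
  | zero => simp [sgn]
  | succ k ih =>
    push_cast
    rw [sgn_add, ih, pow_succ]
    simp [sgn]

lemma dotp_add {p : ℕ} (ζ γ α : Z2 p) : dotp ζ (γ + α) = dotp ζ γ + dotp ζ α := by
  simp [dotp, mul_add, Finset.sum_add_distrib]

lemma dotp_eq_nu {p : ℕ} (ζ α : Z2 p) : dotp ζ α = (nu ζ α : ZMod 2) := by
  have key : ∀ a b : ZMod 2, a * b = ((if a = 1 ∧ b = 1 then 1 else 0 : ℕ) : ZMod 2) := by decide
  rw [dotp, nu, Finset.card_filter, Nat.cast_sum]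
  exact Finset.sum_congr rfl fun i _ => key _ _

lemma Spinor_mul_self {p : ℕ} (ζ α : Z2 p) :
    Spinor ζ α * Spinor ζ α = sgn (dotp ζ α) • (1 : Matrix (Z2 p) (Z2 p) ℂ) := by
  have hαα : ∀ β : Z2 p, β + α + α = β := by
    intro β; funext i
    simp [add_assoc, CharTwo.add_self_eq_zero]
  ext γ β
  simp only [Matrix.mul_apply, Spinor, Matrix.of_apply, Matrix.smul_apply, Matrix.one_apply,
    smul_eq_mul]
  rw [Finset.sum_eq_single (β + α)]
  · rw [hαα]
    by_cases h : γ = β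
    · subst h
      rw [dotp_add, sgn_add]
      simp [← mul_assoc, sgn_mul_self]
    · simp [h, Ne.symm h]
  · intro b _ hb
    simp [hb]
  · simp

attribute [local instance] Matrix.linftyOpNormedRing Matrix.linftyOpNormedAlgebra

lemma exp_smul_involution {n : Type*} [Fintype n] [DecidableEq n] (M : Matrix n n ℂ)
    (hM : M * M = 1) (θ : ℝ) :
    NormedSpace.exp ((Complex.I * θ) • M) =
      (Real.cos θ : ℂ) • (1 : Matrix n n ℂ) + (Complex.I * Real.sin θ) • M := by
  have h := NormedSpace.exp_series_hasSum_exp' (𝕂 := ℂ) ((Complex.I * θ) • M)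
  have hMe : ∀ k : ℕ, M ^ (2 * k) = 1 := by
    intro k
    rw [pow_mul, pow_two, hM, one_pow]
  have hMo : ∀ k : ℕ, M ^ (2 * k + 1) = M := by
    intro k
    rw [pow_succ, hMe, one_mul]
  refine h.unique (HasSum.even_add_odd ?_ ?_)
  · have hc : HasSum
        (fun k : ℕ => ((-1) ^ k * (θ : ℂ) ^ (2 * k) / ((2 * k).factorial : ℂ)) • (1 : Matrix n n ℂ))
        ((Real.cos θ : ℂ) • (1 : Matrix n n ℂ)) := by
      have := (Complex.hasSum_cos (θ : ℂ)).smul_const (1 : Matrix n n ℂ)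
      rwa [← Complex.ofReal_cos] at this
    convert hc using 2 with k
    case e'_3 => exact rfl
    case e'_4 => exact rfl
    rw [smul_pow, hMe, smul_smul]
    congr 1
    rw [mul_pow, pow_mul, Complex.I_sq]
    ring
  · have hs : HasSum (fun k : ℕ =>
        (Complex.I * ((-1) ^ k * (θ : ℂ) ^ (2 * k + 1) / ((2 * k + 1).factorial : ℂ))) • M)
        ((Complex.I * Real.sin θ) • M) := by
      have := ((Complex.hasSum_sin (θ : ℂ)).mul_left Complex.I).smul_const M
      rwa [← Complex.ofReal_sin] at this
    convert hs using 2 with k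
    case e'_3 => exact rfl
    case e'_4 => exact rfl
    rw [smul_pow, hMo, smul_smul]
    congr 1
    rw [mul_pow, pow_succ, pow_mul, Complex.I_sq]
    ring

/-- The s-rotation: `exp(iθ (-i)^{ν(ζ,α)} S^ζ_α) = cos θ · I + i sin θ (-i)^{ν(ζ,α)} S^ζ_α`. -/
theorem sRotation_eq {p : ℕ} (hp : 1 ≤ p) (ζ α : Z2 p) (θ : ℝ) :
    NormedSpace.exp ((Complex.I * θ * (-Complex.I) ^ nu ζ α) • Spinor ζ α) =
      (Real.cos θ : ℂ) • (1 : Matrix (Z2 p) (Z2 p) ℂ) +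
        (Complex.I * Real.sin θ * (-Complex.I) ^ nu ζ α) • Spinor ζ α := by
  set M : Matrix (Z2 p) (Z2 p) ℂ := ((-Complex.I) ^ nu ζ α) • Spinor ζ α with hMdef
  have hM : M * M = 1 := by
    rw [hMdef, smul_mul_smul_comm, Spinor_mul_self, dotp_eq_nu, sgn_natCast, smul_smul]
    rw [← mul_pow, ← mul_pow]
    have : -Complex.I * -Complex.I * -1 = 1 := by
      simp [Complex.I_mul_I]
    rw [this, one_pow, one_smul]
  have h1 : (Complex.I * θ * (-Complex.I) ^ nu ζ α) • Spinor ζ α = (Complex.I * θ) • M := by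
    rw [hMdef, smul_smul]
  have h2 : (Complex.I * Real.sin θ * (-Complex.I) ^ nu ζ α) • Spinor ζ α
      = (Complex.I * Real.sin θ) • M := by
    rw [hMdef, smul_smul]
  rw [h1, h2, exp_smul_involution M hM θ]
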